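/- Let M be a finite preordered type and f : ℝ² → M satisfy f(a) ≤ f(b) whenever a ≺ b. Let y, x, x' ∈ ℝ with x ≤ x', and set p = (x,y) and p' = (x',y). Suppose m ∈ M and an open neighborhood U of p satisfy f(z) ≤ m and m ≤ f(z) for all z ∈ U ∩ ↑p, and suppose m' ∈ M and an open neighborhood U' of p' satisfy f(z) ≤ m' and m' ≤ f(z) for all z ∈ U' ∩ ↑p'. Then m ≤ m'. -/

import Mathlib

/-- The irreflexive slower-than-light relation on ℝ². -/
def slt (a b : ℝ × ℝ) : Prop := a.1 < b.1 ∧ a.2 < b.2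

/-- The strict future cone `↑x = {y | x ≺ y}`. -/
def up (x : ℝ × ℝ) : Set (ℝ × ℝ) := {y | slt x y}

/-- Monotonicity of `f⁺` along a horizontal line: if `x ≤ x'`, `m` is the limiting value of `f`
on the future cone at `(x, y)`, and `m'` is the limiting value at `(x', y)`, then `m ≤ m'`. -/
theorem fplus_mono_horizontal {M : Type} [Fintype M] [Preorder M]
    (f : ℝ × ℝ → M) (hf : ∀ a b : ℝ × ℝ, slt a b → f a ≤ f b)
    (y x x' : ℝ) (hxx' : x ≤ x') (m m' : M) (U U' : Set (ℝ × ℝ))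
    (hUopen : IsOpen U) (hpU : (x, y) ∈ U)
    (hm : ∀ z ∈ U ∩ up (x, y), f z ≤ m ∧ m ≤ f z)
    (hU'open : IsOpen U') (hp'U' : (x', y) ∈ U')
    (hm' : ∀ z ∈ U' ∩ up (x', y), f z ≤ m' ∧ m' ≤ f z) :
    m ≤ m' := by
  obtain ⟨ε, hε, hball⟩ := Metric.isOpen_iff.mp hUopen _ hpU
  obtain ⟨ε', hε', hball'⟩ := Metric.isOpen_iff.mp hU'open _ hp'U'
  set δ' : ℝ := ε' / 2 with hδ'
  set δ : ℝ := min δ' (ε / 2) with hδ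
  have hδpos : 0 < δ := lt_min (by positivity) (by positivity)
  have hδε : δ < ε := lt_of_le_of_lt (min_le_right _ _) (by linarith)
  have hδ'ε' : δ' < ε' := by simp [hδ']; linarith
  have hδδ' : δ ≤ δ' := min_le_left _ _
  set z : ℝ × ℝ := (x + δ / 2, y + δ / 2)
  set z' : ℝ × ℝ := (x' + δ', y + δ')
  have hzU : z ∈ U := by
    apply hball
    simp only [Metric.mem_ball, Prod.dist_eq, z, Real.dist_eq, max_lt_iff]
    constructor <;> rw [abs_of_pos (by linarith)] <;> linarith
  have hz'U' : z' ∈ U' := by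
    apply hball'
    simp only [Metric.mem_ball, Prod.dist_eq, z', Real.dist_eq, max_lt_iff]
    constructor <;> rw [abs_of_pos (by linarith)] <;> linarith
  have hzup : z ∈ up (x, y) := ⟨by show x < x + δ / 2; linarith, by show y < y + δ / 2; linarith⟩
  have hz'up : z' ∈ up (x', y) := ⟨by simpa using by linarith, by simpa using by linarith⟩
  have hzz' : slt z z' := ⟨by simp only [z, z']; linarith, by simp only [z, z']; linarith⟩
  exact le_trans (hm z ⟨hzU, hzup⟩).2 (le_trans (hf z z' hzz') (hm' z' ⟨hz'U', hz'up⟩).1)
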